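/- arXiv:2005.05008 — 3 statements merged into one kernel-verified Lean document; each statement's English description precedes it below -/
import Mathlib

section
/- For any complex numbers a(n) with n an integer in (a, b], and any positive integer Q, |Σ_{a<n≤b} a(n)|² ≤ (1 + (b−a)/Q) · Σ_{|q| ≤ Q} (1 − |q|/Q) · Σ_{a < n, n+q ≤ b} conj(a(n+q))·a(n). -/
open Finset

lemma sum_shift (h : ℤ → ℂ) (l u r : ℤ) :
    ∑ m ∈ Finset.Ioc l u, h (m + r) = ∑ n ∈ Finset.Ioc (l + r) (u + r), h n := by
  rw [← Finset.map_add_right_Ioc, Finset.sum_map]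
  rfl

lemma double_reindex (F : ℤ → ℤ → ℂ) (Q : ℤ) :
    ∑ p ∈ (Finset.Ioc 0 Q ×ˢ Finset.Ioc 0 Q), F p.1 p.2 =
      ∑ q ∈ Finset.Icc (-Q) Q, ∑ r ∈ Finset.Ioc (max 0 (-q)) (min Q (Q - q)), F r (r + q) := by
  rw [Finset.sum_sigma']
  refine Finset.sum_nbij' (fun p => ⟨p.2 - p.1, p.1⟩) (fun x => (x.2, x.2 + x.1)) ?_ ?_ ?_ ?_ ?_
  · rintro ⟨r, s⟩ hp
    simp only [Finset.mem_product, Finset.mem_Ioc] at hp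
    simp only [Finset.mem_sigma, Finset.mem_Icc, Finset.mem_Ioc, max_lt_iff, le_min_iff]
    omega
  · rintro ⟨q, r⟩ hx
    simp only [Finset.mem_sigma, Finset.mem_Icc, Finset.mem_Ioc, max_lt_iff, le_min_iff] at hx
    simp only [Finset.mem_product, Finset.mem_Ioc]
    omega
  · rintro ⟨r, s⟩ _; simp
  · rintro ⟨q, r⟩ _; simp
  · rintro ⟨r, s⟩ _; simp

/-- Weyl–van der Corput shift inequality (Iwaniec–Kowalski, Lemma 8.17):
for any complex numbers `f(n)` with `n` an integer in `(a, b]` and any positive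
integer `Q`,
`|Σ_{a<n≤b} f(n)|² ≤ (1+(b-a)/Q) Σ_{|q|≤Q} (1-|q|/Q) Σ_{a<n, n+q≤b} conj(f(n+q)) f(n)`,
where the inner sum is over `n` with both `n` and `n+q` in `(a,b]`. -/
theorem statement3 (a b : ℤ) (f : ℤ → ℂ) (Q : ℕ) (hQ : 0 < Q) :
    ‖∑ n ∈ Finset.Ioc a b, f n‖ ^ 2 ≤
      (1 + ((b : ℝ) - a) / Q) *
        (∑ q ∈ Finset.Icc (-(Q : ℤ)) (Q : ℤ), (1 - |(q : ℝ)| / Q) *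
          (∑ n ∈ Finset.Ioc (max a (a - q)) (min b (b - q)),
            (starRingEnd ℂ) (f (n + q)) * f n).re) := by
  rcases le_or_gt b a with hba | hab
  · -- trivial case : all intervals empty
    have h1 : Finset.Ioc a b = ∅ := Finset.Ioc_eq_empty (by omega)
    have h2 : ∑ q ∈ Finset.Icc (-(Q : ℤ)) (Q : ℤ), (1 - |(q : ℝ)| / Q) *
        (∑ n ∈ Finset.Ioc (max a (a - q)) (min b (b - q)),
          (starRingEnd ℂ) (f (n + q)) * f n).re = 0 := by
      refine Finset.sum_eq_zero fun q hq => ?_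
      have : Finset.Ioc (max a (a - q)) (min b (b - q)) = ∅ :=
        Finset.Ioc_eq_empty (by simp only [not_lt, le_max_iff, min_le_iff]; omega)
      rw [this]
      simp
    rw [h1, h2]
    simp
  · set g : ℤ → ℂ := fun n => if n ∈ Finset.Ioc a b then f n else 0 with hg
    set S : ℂ := ∑ n ∈ Finset.Ioc a b, f n with hS
    set M : Finset ℤ := Finset.Ioc (a - Q) (b - 1) with hM
    set R : Finset ℤ := Finset.Ioc (0 : ℤ) (Q : ℤ) with hR
    set T : ℤ → ℂ := fun q => ∑ n ∈ Finset.Ioc (max a (a - q)) (min b (b - q)),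
      (starRingEnd ℂ) (f (n + q)) * f n with hT
    set c : ℤ → ℂ := fun m => ∑ r ∈ R, g (m + r) with hc
    -- Step A
    have stepA : ∀ r ∈ R, ∑ m ∈ M, g (m + r) = S := by
      intro r hr
      rw [hR, Finset.mem_Ioc] at hr
      rw [hM, sum_shift]
      rw [← Finset.sum_subset (s₁ := Finset.Ioc a b)
        (by intro n hn; rw [Finset.mem_Ioc] at hn ⊢; omega)
        (by intro n _ hn; rw [hg]; simp [hn])]
      exact Finset.sum_congr rfl fun n hn => by rw [hg]; simp [hn]
    -- Step B
    have stepB : (Q : ℂ) * S = ∑ m ∈ M, c m := by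
      rw [hc, Finset.sum_comm]
      rw [Finset.sum_congr rfl stepA, Finset.sum_const]
      rw [hR, Int.card_Ioc]
      simp [nsmul_eq_mul]
    -- Step C : Cauchy-Schwarz
    have stepC : ‖∑ m ∈ M, c m‖ ^ 2 ≤ (M.card : ℝ) * ∑ m ∈ M, ‖c m‖ ^ 2 := by
      have h1 : ‖∑ m ∈ M, c m‖ ≤ ∑ m ∈ M, ‖c m‖ := norm_sum_le _ _
      have h2 : (∑ m ∈ M, ‖c m‖) ^ 2 ≤ (∑ m ∈ M, (1:ℝ) ^ 2) * ∑ m ∈ M, ‖c m‖ ^ 2 := by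
        simpa using Finset.sum_mul_sq_le_sq_mul_sq M (fun _ => (1:ℝ)) (fun m => ‖c m‖)
      calc ‖∑ m ∈ M, c m‖ ^ 2 ≤ (∑ m ∈ M, ‖c m‖) ^ 2 := by
            apply pow_le_pow_left₀ (norm_nonneg _) h1 2
        _ ≤ (M.card : ℝ) * ∑ m ∈ M, ‖c m‖ ^ 2 := by simpa using h2
    -- Step D
    have innerEq : ∀ q ∈ Finset.Icc (-(Q:ℤ)) (Q:ℤ),
        ∀ r ∈ Finset.Ioc (max 0 (-q)) (min (Q:ℤ) ((Q:ℤ) - q)),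
        ∑ m ∈ M, g (m + r) * (starRingEnd ℂ) (g (m + r + q)) = T q := by
      intro q hq r hr
      rw [Finset.mem_Ioc, max_lt_iff, le_min_iff] at hr
      have hshift : ∑ m ∈ Finset.Ioc (a - (Q:ℤ)) (b - 1), g (m + r) * (starRingEnd ℂ) (g (m + r + q)) =
          ∑ n ∈ Finset.Ioc (a - (Q:ℤ) + r) (b - 1 + r), g n * (starRingEnd ℂ) (g (n + q)) := by
        have h := sum_shift (fun n => g n * (starRingEnd ℂ) (g (n + q))) (a - (Q:ℤ)) (b - 1) r
        rw [← h]
      rw [hM, hshift]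
      rw [← Finset.sum_subset (s₁ := Finset.Ioc (max a (a - q)) (min b (b - q)))
        (by intro n hn; rw [Finset.mem_Ioc, max_lt_iff, le_min_iff] at hn
            rw [Finset.mem_Ioc]; omega)
        (by intro n hn hn'
            rw [Finset.mem_Ioc, max_lt_iff, le_min_iff, not_and_or, not_and_or] at hn'
            have : n ∉ Finset.Ioc a b ∨ n + q ∉ Finset.Ioc a b := by
              rw [Finset.mem_Ioc, Finset.mem_Ioc]; omega
            rcases this with h | h
            · rw [hg]; simp [h]
            · rw [hg]; simp [h])]
      refine Finset.sum_congr rfl fun n hn => ?_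
      rw [Finset.mem_Ioc, max_lt_iff, le_min_iff] at hn
      have h1 : n ∈ Finset.Ioc a b := by rw [Finset.mem_Ioc]; omega
      have h2 : n + q ∈ Finset.Ioc a b := by rw [Finset.mem_Ioc]; omega
      simp only [hg]
      rw [if_pos h1, if_pos h2]
      ring
    have stepD : ∑ m ∈ M, ‖c m‖ ^ 2 =
        ∑ q ∈ Finset.Icc (-(Q:ℤ)) (Q:ℤ), ((Q:ℝ) - |(q:ℝ)|) * (T q).re := by
      have hnorm : ∀ z : ℂ, ‖z‖ ^ 2 = (z * (starRingEnd ℂ) z).re := fun z => by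
        rw [Complex.mul_conj, Complex.ofReal_re, Complex.normSq_eq_norm_sq]
      have key : ∑ m ∈ M, (c m * (starRingEnd ℂ) (c m)) =
          ∑ q ∈ Finset.Icc (-(Q:ℤ)) (Q:ℤ), ((Q:ℤ) - |q|).toNat • T q := by
        have expand : ∀ m : ℤ, c m * (starRingEnd ℂ) (c m) =
            ∑ p ∈ R ×ˢ R, g (m + p.1) * (starRingEnd ℂ) (g (m + p.2)) := by
          intro m
          rw [hc, map_sum, Finset.sum_mul_sum, ← Finset.sum_product']
        rw [Finset.sum_congr rfl fun m _ => expand m, Finset.sum_comm]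
        rw [Finset.sum_congr rfl fun p _ => rfl]
        have swap : ∑ p ∈ R ×ˢ R, ∑ m ∈ M, g (m + p.1) * (starRingEnd ℂ) (g (m + p.2)) =
            ∑ q ∈ Finset.Icc (-(Q:ℤ)) (Q:ℤ),
              ∑ r ∈ Finset.Ioc (max 0 (-q)) (min (Q:ℤ) ((Q:ℤ) - q)),
                ∑ m ∈ M, g (m + r) * (starRingEnd ℂ) (g (m + (r + q))) := by
          exact double_reindex (fun r s => ∑ m ∈ M, g (m + r) * (starRingEnd ℂ) (g (m + s))) (Q:ℤ)
        rw [swap]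
        refine Finset.sum_congr rfl fun q hq => ?_
        have : ∀ r ∈ Finset.Ioc (max 0 (-q)) (min (Q:ℤ) ((Q:ℤ) - q)),
            ∑ m ∈ M, g (m + r) * (starRingEnd ℂ) (g (m + (r + q))) = T q := by
          intro r hr
          have := innerEq q hq r hr
          simpa [add_assoc] using this
        rw [Finset.sum_congr rfl this, Finset.sum_const, Int.card_Ioc]
        congr 1
        rw [Finset.mem_Icc] at hq
        rcases le_or_gt 0 q with h | h
        · rw [abs_of_nonneg h]; congr 1; omega
        · rw [abs_of_neg h]; congr 1; omega
      calc ∑ m ∈ M, ‖c m‖ ^ 2 = (∑ m ∈ M, (c m * (starRingEnd ℂ) (c m))).re := by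
            rw [Complex.re_sum]; exact Finset.sum_congr rfl fun m _ => hnorm (c m)
        _ = ∑ q ∈ Finset.Icc (-(Q:ℤ)) (Q:ℤ), ((Q:ℝ) - |(q:ℝ)|) * (T q).re := by
            rw [key, Complex.re_sum]
            refine Finset.sum_congr rfl fun q hq => ?_
            rw [Finset.mem_Icc] at hq
            have h0 : (0:ℤ) ≤ (Q:ℤ) - |q| := by
              rcases abs_cases q with ⟨h,_⟩ | ⟨h,_⟩ <;> omega
            rw [nsmul_eq_mul]
            simp only [Complex.mul_re, Complex.natCast_re, Complex.natCast_im]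
            have hcast : (((Q:ℤ) - |q|).toNat : ℝ) = (Q:ℝ) - |(q:ℝ)| := by
              have e1 : ((((Q:ℤ) - |q|).toNat : ℤ) : ℝ) = (((Q:ℤ) - |q| : ℤ) : ℝ) := by
                rw [Int.toNat_of_nonneg h0]
              push_cast at e1
              push_cast
              linarith
            rw [hcast]
            ring
    -- Final assembly
    set Sg : ℝ := ∑ q ∈ Finset.Icc (-(Q:ℤ)) (Q:ℤ), (1 - |(q:ℝ)| / Q) * (T q).re with hSg
    have hQR : (0:ℝ) < Q := by exact_mod_cast hQ
    have hQsum : ∑ q ∈ Finset.Icc (-(Q:ℤ)) (Q:ℤ), ((Q:ℝ) - |(q:ℝ)|) * (T q).re = Q * Sg := by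
      rw [hSg, Finset.mul_sum]
      refine Finset.sum_congr rfl fun q _ => ?_
      have : (Q:ℝ) * (1 - |(q:ℝ)| / Q) = (Q:ℝ) - |(q:ℝ)| := by
        field_simp
      rw [← mul_assoc, this]
    have hSnn : 0 ≤ Sg := by
      have h1 : 0 ≤ ∑ m ∈ M, ‖c m‖ ^ 2 := Finset.sum_nonneg fun m _ => by positivity
      rw [stepD, hQsum] at h1
      nlinarith
    have hcard : (M.card : ℝ) = (b:ℝ) - a + Q - 1 := by
      rw [hM, Int.card_Ioc]
      have h0 : (0:ℤ) ≤ b - 1 - (a - Q) := by omega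
      have e1 : (((b - 1 - (a - (Q:ℤ))).toNat : ℤ) : ℝ) = ((b - 1 - (a - (Q:ℤ)) : ℤ) : ℝ) := by
        rw [Int.toNat_of_nonneg h0]
      push_cast at e1 ⊢
      linarith
    have hmain : (Q:ℝ)^2 * ‖S‖^2 ≤ ((b:ℝ) - a + Q - 1) * (Q * Sg) := by
      have h1 : ‖(Q:ℂ) * S‖ ^ 2 = (Q:ℝ)^2 * ‖S‖^2 := by
        rw [norm_mul, mul_pow, Complex.norm_natCast]
      rw [← h1, stepB]
      calc ‖∑ m ∈ M, c m‖ ^ 2 ≤ (M.card : ℝ) * ∑ m ∈ M, ‖c m‖ ^ 2 := stepC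
        _ = ((b:ℝ) - a + Q - 1) * (Q * Sg) := by rw [hcard, stepD, hQsum]
    rw [show (1 + ((b:ℝ) - a) / Q) * Sg = (((Q:ℝ) + ((b:ℝ) - a)) * ((Q:ℝ) * Sg)) / (Q:ℝ)^2 by
      field_simp]
    rw [le_div_iff₀ (by positivity)]
    have h2 : ((b:ℝ) - a + Q - 1) * ((Q:ℝ) * Sg) ≤ ((Q:ℝ) + ((b:ℝ) - a)) * ((Q:ℝ) * Sg) := by
      apply mul_le_mul_of_nonneg_right (by linarith) (by positivity)
    nlinarith
end

section
/- For any real M ≥ 2 and any real t, ψ(t) = −Σ_{1 ≤ |m| ≤ M} e(mt)/(2πim) + O(min(1, 1/(M·‖t‖))), where the implied constant is absolute. -/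
open Real Finset

/-- Distance from `x` to the nearest integer. -/
noncomputable def nint (x : ℝ) : ℝ := |x - round x|

/-- `e(t) = exp(2πit)`. -/
noncomputable def e (t : ℝ) : ℂ := Complex.exp (2 * Real.pi * Complex.I * t)

/-- `ψ(t) = {t} - 1/2`. -/
noncomputable def psi (t : ℝ) : ℝ := Int.fract t - 1/2



lemma dirichlet (N : ℕ) (u : ℝ) (hu : Real.sin (u/2) ≠ 0) :
    1/2 + ∑ m ∈ Finset.Icc 1 N, Real.cos (m * u)
      = Real.sin (((N:ℝ) + 1/2) * u) / (2 * Real.sin (u/2)) := by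
  have h2 : (2 : ℝ) * Real.sin (u/2) ≠ 0 := mul_ne_zero two_ne_zero hu
  rw [eq_div_iff h2]
  induction N with
  | zero => simp; ring
  | succ n ih =>
    rw [Finset.sum_Icc_succ_top (by omega : 1 ≤ n + 1)]
    have step : (2 * Real.sin (u/2)) * Real.cos ((n+1 : ℕ) * u)
        = Real.sin (((n:ℝ) + 1 + 1/2) * u) - Real.sin (((n:ℝ) + 1/2) * u) := by
      rw [Real.sin_sub_sin]; push_cast; ring_nf
    push_cast
    push_cast at step ⊢; nlinarith [ih, step]

noncomputable def gg (u : ℝ) : ℝ := 1 / (2 * Real.sin (u/2))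

lemma sin_half_pos {u : ℝ} (h0 : 0 < u) (h1 : u ≤ π) : 0 < Real.sin (u/2) :=
  Real.sin_pos_of_pos_of_lt_pi (by linarith) (by linarith [Real.pi_pos])

lemma gg_contOn {x : ℝ} (hx : 0 < x) (hπ : x ≤ π) :
    ContinuousOn gg (Set.Icc x π) := by
  apply ContinuousOn.div continuousOn_const
  · exact (continuous_const.mul (Real.continuous_sin.comp (continuous_id.div_const 2))).continuousOn
  · intro u hu
    exact mul_ne_zero two_ne_zero (sin_half_pos (lt_of_lt_of_le hx hu.1) hu.2).ne'

lemma F_eq_integral (N : ℕ) {x : ℝ} (hx : 0 < x) (hπ : x ≤ π) :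
    (π - x)/2 - ∑ m ∈ Finset.Icc 1 N, Real.sin (m * x) / m
      = ∫ u in x..π, Real.sin (((N:ℝ) + 1/2) * u) * gg u := by
  have hD : ∀ u ∈ Set.uIcc x π, HasDerivAt
      (fun v => -((π - v)/2 - ∑ m ∈ Finset.Icc 1 N, Real.sin (m * v) / m))
      (Real.sin (((N:ℝ) + 1/2) * u) * gg u) u := by
    intro u hu
    rw [Set.uIcc_of_le hπ] at hu
    have hu0 : 0 < u := lt_of_lt_of_le hx hu.1
    have hsin := sin_half_pos hu0 hu.2
    have hsum : HasDerivAt (fun v : ℝ => ∑ m ∈ Finset.Icc 1 N, Real.sin (m * v) / m)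
        (∑ m ∈ Finset.Icc 1 N, Real.cos (m * u)) u := by
      apply HasDerivAt.fun_sum
      intro m hm
      have hm0 : (0:ℝ) < m := by
        have := (Finset.mem_Icc.mp hm).1; positivity
      have h : HasDerivAt (fun v : ℝ => Real.sin (m * v)) (Real.cos ((m:ℝ) * u) * m) u := by
        have := (Real.hasDerivAt_sin ((m:ℝ) * u)).comp u ((hasDerivAt_id u).const_mul (m:ℝ))
        simpa [Function.comp_def, mul_comm (m:ℝ)] using this
      have h2 := h.div_const (m:ℝ)
      rw [mul_div_assoc, div_self hm0.ne', mul_one] at h2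
      exact h2
    have hlin := ((hasDerivAt_id u).const_sub π).div_const 2
    have h1 := (hlin.sub hsum).neg
    have hdir := dirichlet N u hsin.ne'
    have heq : Real.sin (((N:ℝ) + 1/2) * u) * gg u
        = -((-1)/2 - ∑ m ∈ Finset.Icc 1 N, Real.cos (m * u)) := by
      rw [gg, ← div_eq_mul_one_div, ← hdir]; ring
    rw [heq]
    exact h1
  rw [intervalIntegral.integral_eq_sub_of_hasDerivAt hD]
  · have hz : ∑ m ∈ Finset.Icc 1 N, Real.sin (m * π) / m = 0 := by
      apply Finset.sum_eq_zero
      intro m hm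
      have : Real.sin (m * π) = 0 := by
        simpa using Real.sin_int_mul_pi (m:ℤ)
      simp [this]
    rw [hz]
    ring
  · apply ContinuousOn.intervalIntegrable
    rw [Set.uIcc_of_le hπ]
    exact ((Real.continuous_sin.comp (continuous_const.mul continuous_id)).continuousOn).mul
      (gg_contOn hx hπ)

noncomputable def gg' (u : ℝ) : ℝ := -Real.cos (u/2) / (4 * Real.sin (u/2)^2)

lemma hasDerivAt_gg {u : ℝ} (hu : Real.sin (u/2) ≠ 0) : HasDerivAt gg (gg' u) u := by
  have hd : HasDerivAt (fun v : ℝ => 2 * Real.sin (v/2)) (Real.cos (u/2)) u := by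
    have h1 := (Real.hasDerivAt_sin (u/2)).comp u ((hasDerivAt_id u).div_const 2)
    have h2 := h1.const_mul (2:ℝ)
    have hfun : (fun v : ℝ => 2 * Real.sin (v/2)) = fun v => 2 * (Real.sin ∘ fun y : ℝ => y/2) v := by
      funext v; simp [Function.comp_def]
    have hder : Real.cos (u/2) = 2 * (Real.cos (u/2) * (1/2)) := by ring
    rw [hfun, hder]; exact h2
  have h := (hasDerivAt_const u (1:ℝ)).div hd (mul_ne_zero two_ne_zero hu)
  refine h.congr_deriv ?_
  symm
  rw [gg']
  rw [div_eq_div_iff (by positivity) (by nlinarith [sq_abs (Real.sin (u/2)), abs_pos.mpr hu])]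
  ring
lemma gg'_contOn {x : ℝ} (hx : 0 < x) (hπ : x ≤ π) :
    ContinuousOn gg' (Set.Icc x π) := by
  apply ContinuousOn.div
  · exact ((Real.continuous_cos.comp (continuous_id.div_const 2)).neg).continuousOn
  · exact (continuous_const.mul ((Real.continuous_sin.comp (continuous_id.div_const 2)).pow 2)).continuousOn
  · intro u hu
    have := sin_half_pos (lt_of_lt_of_le hx hu.1) hu.2
    positivity

lemma ibp_bound {l x : ℝ} (hl : 1 ≤ l) (hx : 0 < x) (hπ : x ≤ π) :
    |∫ u in x..π, Real.sin (l * u) * gg u| ≤ 2 * gg x / l := by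
  have hl0 : 0 < l := lt_of_lt_of_le one_pos hl
  -- derivative of H * gg where H u = -cos(l u)/l
  set H : ℝ → ℝ := fun u => -Real.cos (l * u) / l with hH
  have hHd : ∀ u : ℝ, HasDerivAt H (Real.sin (l * u)) u := by
    intro u
    have h1 := (Real.hasDerivAt_cos (l * u)).comp u ((hasDerivAt_id u).const_mul l)
    have h2 := (h1.const_mul (-1:ℝ)).div_const l
    have hfun : H = fun v => -1 * (Real.cos ∘ (HMul.hMul l)) v / l := by
      funext v; simp only [hH, Function.comp_def]; ring
    have hder : Real.sin (l*u) = -1 * (-Real.sin (l*u) * (l*1))/l := by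
      rw [eq_div_iff hl0.ne']; ring
    rw [hfun, hder]; exact h2
  have hprod : ∀ u ∈ Set.uIcc x π, HasDerivAt (fun v => H v * gg v)
      (Real.sin (l * u) * gg u + H u * gg' u) u := by
    intro u hu
    rw [Set.uIcc_of_le hπ] at hu
    have hs := sin_half_pos (lt_of_lt_of_le hx hu.1) hu.2
    exact (hHd u).mul (hasDerivAt_gg hs.ne')
  have hcont1 : ContinuousOn (fun u => Real.sin (l * u) * gg u) (Set.Icc x π) :=
    ((Real.continuous_sin.comp (continuous_const.mul continuous_id)).continuousOn).mul (gg_contOn hx hπ)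
  have hcont2 : ContinuousOn (fun u => H u * gg' u) (Set.Icc x π) := by
    apply ContinuousOn.mul _ (gg'_contOn hx hπ)
    exact (((Real.continuous_cos.comp (continuous_const.mul continuous_id)).neg).div_const l).continuousOn
  have hint1 : IntervalIntegrable (fun u => Real.sin (l * u) * gg u) MeasureTheory.volume x π := by
    apply ContinuousOn.intervalIntegrable; rwa [Set.uIcc_of_le hπ]
  have hint2 : IntervalIntegrable (fun u => H u * gg' u) MeasureTheory.volume x π := by
    apply ContinuousOn.intervalIntegrable; rwa [Set.uIcc_of_le hπ]
  have hftc := intervalIntegral.integral_eq_sub_of_hasDerivAt hprod (hint1.add hint2)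
  rw [intervalIntegral.integral_add hint1 hint2] at hftc
  have hmain : ∫ u in x..π, Real.sin (l * u) * gg u
      = (H π * gg π - H x * gg x) - ∫ u in x..π, H u * gg' u := by
    rw [← hftc]; ring
  -- bounds
  have hggx : (1:ℝ)/2 ≤ gg x ∧ 0 < gg x := by
    have hs := sin_half_pos hx hπ
    constructor
    · rw [gg]
      rw [div_le_div_iff₀ two_pos (by positivity)]
      have := Real.sin_le_one (x/2)
      nlinarith
    · rw [gg]; positivity
  have hggπ : gg π = 1/2 := by rw [gg]; norm_num
  have hHb : ∀ u : ℝ, |H u| ≤ 1/l := by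
    intro u
    rw [hH]
    simp only [abs_div, abs_neg, abs_of_pos hl0]
    gcongr
    exact Real.abs_cos_le_one _
  -- bound the second integral
  have hggd : ∀ u ∈ Set.uIcc x π, HasDerivAt (fun v => -gg v) (-gg' u) u := by
    intro u hu
    rw [Set.uIcc_of_le hπ] at hu
    exact (hasDerivAt_gg (sin_half_pos (lt_of_lt_of_le hx hu.1) hu.2).ne').neg
  have hint3 : IntervalIntegrable (fun u => -gg' u) MeasureTheory.volume x π := by
    apply ContinuousOn.intervalIntegrable
    rw [Set.uIcc_of_le hπ]
    exact (gg'_contOn hx hπ).neg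
  have hftc2 : ∫ u in x..π, -gg' u = gg x - gg π := by
    rw [intervalIntegral.integral_eq_sub_of_hasDerivAt hggd hint3]
    ring
  have hb2 : |∫ u in x..π, H u * gg' u| ≤ (gg x - gg π) / l := by
    calc |∫ u in x..π, H u * gg' u| ≤ ∫ u in x..π, |H u * gg' u| := by
          have := intervalIntegral.norm_integral_le_integral_norm
            (f := fun u => H u * gg' u) (μ := MeasureTheory.volume) hπ
          simpa [abs_mul] using this
      _ ≤ ∫ u in x..π, (1/l) * (-gg' u) := by
          apply intervalIntegral.integral_mono_on hπ hint2.abs (hint3.const_mul (1/l))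
          intro u hu
          have hg'le : gg' u ≤ 0 := by
            have hcos : 0 ≤ Real.cos (u/2) := by
              have hu0 := lt_of_lt_of_le hx hu.1
              have hp := Real.pi_pos
              exact Real.cos_nonneg_of_mem_Icc ⟨by linarith, by linarith [hu.2]⟩
            rw [gg']
            have hs := sin_half_pos (lt_of_lt_of_le hx hu.1) hu.2
            apply div_nonpos_of_nonpos_of_nonneg <;> [linarith; positivity]
          rw [abs_mul, abs_of_nonpos hg'le]
          exact mul_le_mul_of_nonneg_right (hHb u) (by linarith)
      _ = (gg x - gg π) / l := by
          rw [intervalIntegral.integral_const_mul, hftc2]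
          ring
  have h1 : |H π * gg π| ≤ (1/l) * (1/2) := by
    rw [abs_mul, hggπ, abs_of_nonneg (by norm_num : (0:ℝ) ≤ 1/2)]
    exact mul_le_mul_of_nonneg_right (hHb π) (by norm_num)
  have h2 : |H x * gg x| ≤ (1/l) * gg x := by
    rw [abs_mul, abs_of_pos hggx.2]
    exact mul_le_mul_of_nonneg_right (hHb x) hggx.2.le
  rw [hmain]
  have htri : |H π * gg π - H x * gg x - ∫ u in x..π, H u * gg' u|
      ≤ |H π * gg π| + |H x * gg x| + |∫ u in x..π, H u * gg' u| := by
    calc _ ≤ |H π * gg π - H x * gg x| + |∫ u in x..π, H u * gg' u| := abs_sub _ _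
      _ ≤ _ := by gcongr; exact abs_sub _ _
  have : (1/l) * (1/2) + (1/l) * gg x + (gg x - gg π) / l = 2 * gg x / l := by
    rw [hggπ]; field_simp; ring
  linarith [htri, h1, h2, hb2]

lemma gg_le {x : ℝ} (hx : 0 < x) (hπ : x ≤ π) : gg x ≤ π / (2 * x) := by
  have hs := sin_half_pos hx hπ
  have hm := Real.mul_le_sin (x := x/2) (by linarith) (by linarith)
  have hp := Real.pi_pos
  have hm2 : 2/π * (x/2) = x/π := by ring
  rw [hm2, div_le_iff₀ hp] at hm
  rw [gg, div_le_div_iff₀ (by positivity) (by positivity)]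
  nlinarith

lemma bound1 {l x : ℝ} (hl : 1 ≤ l) (hx : 0 < x) (hπ : x ≤ π) :
    |∫ u in x..π, Real.sin (l * u) * gg u| ≤ π / (l * x) := by
  refine le_trans (ibp_bound hl hx hπ) ?_
  have hgg := gg_le hx hπ
  have hl0 : 0 < l := lt_of_lt_of_le one_pos hl
  rw [le_div_iff₀ (by positivity)] at hgg
  rw [div_le_div_iff₀ hl0 (by positivity)]
  nlinarith [mul_le_mul_of_nonneg_right hgg hl0.le]

lemma bound2 {l x : ℝ} (hl : 3/2 ≤ l) (hx : 0 < x) (hπ : x ≤ π) :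
    |∫ u in x..π, Real.sin (l * u) * gg u| ≤ 3 * π / 2 := by
  have hl1 : (1:ℝ) ≤ l := by linarith
  have hl0 : 0 < l := by linarith
  have hp := Real.pi_pos
  rcases le_or_gt (1/l) x with h | h
  · refine le_trans (bound1 hl1 hx hπ) ?_
    have hlx : 1 ≤ l * x := by
      rw [div_le_iff₀ hl0] at h; linarith [mul_comm x l ▸ h]
    rw [div_le_iff₀ (by linarith)]
    nlinarith
  · -- x < 1/l ≤ π
    have hInv : 0 < 1/l := by positivity
    have hInvπ : 1/l ≤ π := by
      rw [div_le_iff₀ hl0]; nlinarith [Real.pi_gt_three]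
    have hintl : ∀ a b : ℝ, x ≤ a → a ≤ b → b ≤ π →
        IntervalIntegrable (fun u => Real.sin (l * u) * gg u) MeasureTheory.volume a b := by
      intro a b ha hab hb
      apply ContinuousOn.intervalIntegrable
      rw [Set.uIcc_of_le hab]
      apply ContinuousOn.mono (s := Set.Icc x π)
      · exact ((Real.continuous_sin.comp (continuous_const.mul continuous_id)).continuousOn).mul
          (gg_contOn hx hπ)
      · exact Set.Icc_subset_Icc ha hb
    have hsplit : ∫ u in x..π, Real.sin (l * u) * gg u
        = (∫ u in x..(1/l), Real.sin (l * u) * gg u) + ∫ u in (1/l)..π, Real.sin (l * u) * gg u :=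
      (intervalIntegral.integral_add_adjacent_intervals
        (hintl x (1/l) le_rfl h.le hInvπ) (hintl (1/l) π h.le hInvπ le_rfl)).symm
    have hb1 : |∫ u in x..(1/l), Real.sin (l * u) * gg u| ≤ π / 2 := by
      have hc : ∀ u ∈ Set.uIoc x (1/l), ‖Real.sin (l * u) * gg u‖ ≤ π * l / 2 := by
        intro u hu
        rw [Set.uIoc_of_le h.le] at hu
        have hu0 : 0 < u := lt_trans hx hu.1
        have huπ : u ≤ π := le_trans hu.2 hInvπ
        have h1 : |Real.sin (l * u)| ≤ l * u := by
          have := Real.abs_sin_le_abs (x := l * u)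
          rwa [abs_of_pos (mul_pos hl0 hu0)] at this
        have h2 : gg u ≤ π / (2 * u) := gg_le hu0 huπ
        have h3 : 0 < gg u := by have := sin_half_pos hu0 huπ; rw [gg]; positivity
        rw [Real.norm_eq_abs, abs_mul, abs_of_pos h3]
        calc |Real.sin (l * u)| * gg u ≤ (l * u) * (π / (2 * u)) := by
              apply mul_le_mul h1 h2 h3.le (by positivity)
          _ = π * l / 2 := by field_simp
      refine le_trans (intervalIntegral.norm_integral_le_of_norm_le_const hc) ?_
      rw [abs_of_nonneg (by linarith)]
      have h5 : π * l / 2 * (1/l - x) ≤ π * l/2 * (1/l) :=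
        mul_le_mul_of_nonneg_left (by linarith) (by positivity)
      have h4 : π * l / 2 * (1/l) = π/2 := by field_simp
      linarith
    have hb2 : |∫ u in (1/l)..π, Real.sin (l * u) * gg u| ≤ π := by
      refine le_trans (bound1 hl1 hInv hInvπ) ?_
      have : l * (1/l) = 1 := by field_simp
      rw [this, div_one]
    rw [hsplit]
    calc |_ + _| ≤ _ + _ := abs_add_le _ _
      _ ≤ π/2 + π := add_le_add hb1 hb2
      _ ≤ 3 * π / 2 := by linarith

lemma key (N : ℕ) (hN : 1 ≤ N) {t : ℝ} (ht0 : 0 < t) (ht2 : t ≤ 1/2) :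
    |(t - 1/2) + ∑ m ∈ Finset.Icc 1 N, Real.sin (2*π*m*t)/(π*m)|
      ≤ min (3/2) (1/(((N:ℝ)+1/2)*(2*π*t))) := by
  have hp := Real.pi_pos
  set x := 2*π*t with hx
  have hx0 : 0 < x := by positivity
  have hxπ : x ≤ π := by rw [hx]; nlinarith
  set l := (N:ℝ) + 1/2 with hl
  have hl32 : 3/2 ≤ l := by
    have : (1:ℝ) ≤ N := by exact_mod_cast hN
    rw [hl]; linarith
  have hl1 : (1:ℝ) ≤ l := le_trans (by norm_num) hl32
  have hFi := F_eq_integral N hx0 hxπ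
  have hid : (t - 1/2) + ∑ m ∈ Finset.Icc 1 N, Real.sin (2*π*m*t)/(π*m)
      = -(1/π) * ((π - x)/2 - ∑ m ∈ Finset.Icc 1 N, Real.sin (m * x) / m) := by
    rw [neg_mul, mul_sub, Finset.mul_sum, neg_sub]
    have h1 : ∀ m ∈ Finset.Icc 1 N, Real.sin (2*π*m*t)/(π*m) = 1/π * (Real.sin (m*x)/m) := by
      intro m hm
      have : 2*π*(m:ℝ)*t = (m:ℝ) * x := by rw [hx]; ring
      rw [this]; ring
    rw [Finset.sum_congr rfl h1]
    have h2 : t - 1/2 = -(1/π * ((π - x)/2)) := by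
      rw [hx]; field_simp; ring
    rw [h2]; ring
  rw [hid, abs_mul, abs_neg, abs_of_pos (by positivity : (0:ℝ) < 1/π), hFi]
  rw [le_min_iff]
  constructor
  · have := bound2 hl32 hx0 hxπ
    calc 1/π * |∫ u in x..π, Real.sin (l * u) * gg u| ≤ 1/π * (3*π/2) :=
        mul_le_mul_of_nonneg_left this (by positivity)
      _ = 3/2 := by field_simp
  · have := bound1 hl1 hx0 hxπ
    calc 1/π * |∫ u in x..π, Real.sin (l * u) * gg u| ≤ 1/π * (π/(l*x)) :=
        mul_le_mul_of_nonneg_left this (by positivity)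
      _ = 1/(l*x) := by
          have hlx : l * x ≠ 0 := by positivity
          field_simp


lemma term_pair (t : ℝ) {m : ℤ} (hm : 1 ≤ m) :
    e (m * t) / (2 * Real.pi * Complex.I * m) + e ((-m : ℤ) * t) / (2 * Real.pi * Complex.I * (-m : ℤ))
      = ((Real.sin (2*π*m*t) / (π*m) : ℝ) : ℂ) := by
  have hm0 : (m:ℂ) ≠ 0 := Int.cast_ne_zero.mpr (by omega)
  have hπ : (Real.pi:ℂ) ≠ 0 := Complex.ofReal_ne_zero.mpr Real.pi_ne_zero
  have he1 : e (m * t) = Complex.cos (2*π*m*t) + Complex.sin (2*π*m*t) * Complex.I := by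
    rw [e, ← Complex.exp_mul_I]
    congr 1
    push_cast
    ring
  have he2 : e ((-m : ℤ) * t) = Complex.cos (2*π*m*t) - Complex.sin (2*π*m*t) * Complex.I := by
    rw [e, show (2 * (Real.pi:ℂ) * Complex.I * (((-m : ℤ):ℝ) * t : ℝ))
        = (-(2*π*m*t) : ℝ) * Complex.I from by push_cast; ring, Complex.exp_mul_I]
    push_cast
    rw [Complex.cos_neg, Complex.sin_neg]
    ring
  rw [he1, he2]
  rw [Complex.ofReal_div]
  push_cast [Complex.ofReal_sin]
  have hI := Complex.I_ne_zero
  field_simp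
  ring_nf

lemma sum_reduce (n : ℤ) (hn : 0 ≤ n) (t : ℝ) :
    ∑ m ∈ (Finset.Icc (-n) n).erase 0, e (m * t) / (2 * Real.pi * Complex.I * m)
      = ((∑ m ∈ Finset.Icc 1 n.toNat, Real.sin (2*π*m*t) / (π*m) : ℝ) : ℂ) := by
  set f : ℤ → ℂ := fun m => e (m * t) / (2 * Real.pi * Complex.I * m) with hf
  have hsplit : (Finset.Icc (-n) n).erase 0 = Finset.Icc (-n) (-1) ∪ Finset.Icc 1 n := by
    ext a
    simp only [Finset.mem_erase, Finset.mem_Icc, Finset.mem_union]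
    omega
  have hdisj : Disjoint (Finset.Icc (-n) (-1)) (Finset.Icc (1:ℤ) n) := by
    rw [Finset.disjoint_left]
    intro a ha hb
    simp only [Finset.mem_Icc] at ha hb
    omega
  have himg : Finset.Icc (-n) (-1) = (Finset.Icc (1:ℤ) n).image (fun m => -m) := by
    ext a
    simp only [Finset.mem_Icc, Finset.mem_image]
    constructor
    · intro h; exact ⟨-a, by omega, by omega⟩
    · rintro ⟨b, hb, rfl⟩; omega
  have hneg : ∑ m ∈ Finset.Icc (-n) (-1), f m = ∑ m ∈ Finset.Icc (1:ℤ) n, f (-m) := by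
    rw [himg, Finset.sum_image (fun a _ b _ h => by omega)]
  rw [hsplit, Finset.sum_union hdisj, hneg, ← Finset.sum_add_distrib]
  have hterm : ∀ m ∈ Finset.Icc (1:ℤ) n, f (-m) + f m
      = ((Real.sin (2*π*m*t) / (π*m) : ℝ) : ℂ) := by
    intro m hm
    rw [Finset.mem_Icc] at hm
    rw [add_comm, hf]
    exact term_pair t hm.1
  rw [Finset.sum_congr rfl hterm, ← Complex.ofReal_sum]
  norm_cast
  have hNat : Finset.Icc (1:ℤ) n = (Finset.Icc 1 n.toNat).image (fun k : ℕ => (k:ℤ)) := by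
    ext a
    simp only [Finset.mem_Icc, Finset.mem_image]
    constructor
    · intro h; exact ⟨a.toNat, by omega, by omega⟩
    · rintro ⟨b, hb, rfl⟩; omega
  rw [hNat, Finset.sum_image (fun a _ b _ h => by omega)]
  apply Finset.sum_congr rfl
  intro k _
  norm_num

lemma minle {M s : ℝ} {N : ℕ} (hM : 2 ≤ M) (hs : 0 < s) (hMN : M - 1 ≤ (N:ℝ)) :
    min (3/2) (1/(((N:ℝ)+1/2)*(2*π*s))) ≤ 2 * min 1 (1/(M*s)) := by
  have hp := Real.pi_gt_three
  rcases le_total 1 (1/(M*s)) with h | h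
  · rw [min_eq_left h]
    calc min (3/2) (1/(((N:ℝ)+1/2)*(2*π*s))) ≤ 3/2 := min_le_left _ _
      _ ≤ 2 * 1 := by norm_num
  · rw [min_eq_right h]
    refine le_trans (min_le_right _ _) ?_
    have hd : M * s ≤ ((N:ℝ)+1/2)*(2*π*s) := by
      have hN2 : M/2 ≤ (N:ℝ)+1/2 := by linarith
      have hM0 : 0 < M := by linarith
      nlinarith [mul_le_mul_of_nonneg_right hN2 (by positivity : (0:ℝ) ≤ 2*π*s),
        mul_pos hM0 hs]
    calc 1/(((N:ℝ)+1/2)*(2*π*s)) ≤ 1/(M*s) :=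
        one_div_le_one_div_of_le (by positivity) hd
      _ ≤ 2 * (1/(M*s)) := by
          have : 0 ≤ 1/(M*s) := by positivity
          linarith


/-- Truncated Fourier expansion of the sawtooth function: for `M ≥ 2`,
`ψ(t) = -Σ_{1≤|m|≤M} e(mt)/(2πim) + O(min(1, 1/(M‖t‖)))` with absolute constant. -/
theorem statement4 :
    ∃ C > 0, ∀ (M t : ℝ), 2 ≤ M →
      ‖(psi t : ℂ) + ∑ m ∈ (Finset.Icc (-⌊M⌋) ⌊M⌋).erase 0,
          e (m * t) / (2 * Real.pi * Complex.I * m)‖ ≤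
        C * (if nint t = 0 then 1 else min 1 (1 / (M * nint t))) := by
  refine ⟨2, by norm_num, ?_⟩
  intro M t hM
  have hp := Real.pi_pos
  set n := ⌊M⌋ with hn
  have hn2 : (2:ℤ) ≤ n := Int.le_floor.mpr (by exact_mod_cast hM)
  have hn0 : (0:ℤ) ≤ n := by omega
  set N := n.toNat with hNdef
  have hNn : (N:ℤ) = n := Int.toNat_of_nonneg hn0
  have hN1 : 1 ≤ N := by omega
  have hMN : M - 1 ≤ (N:ℝ) := by
    have h2 : M - 1 < ((n:ℤ):ℝ) := Int.sub_one_lt_floor M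
    have h3 : ((N:ℤ):ℝ) = ((n:ℤ):ℝ) := by rw [hNn]
    push_cast at h3
    rw [h3]
    linarith
  set S : ℝ → ℝ := fun s => ∑ m ∈ Finset.Icc 1 N, Real.sin (2*π*m*s)/(π*m) with hS
  rw [sum_reduce n hn0 t, ← Complex.ofReal_add, Complex.norm_real, Real.norm_eq_abs]
  have hfold : ∑ m ∈ Finset.Icc 1 n.toNat, Real.sin (2*π*m*t)/(π*m) = S t := rfl
  rw [hfold]
  -- now a real inequality about |psi t + S t|
  set r := Int.fract t with hr
  have hr0 : 0 ≤ r := Int.fract_nonneg t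
  have hr1 : r < 1 := Int.fract_lt_one t
  have hpsit : psi t = r - 1/2 := by rw [psi]
  have hSt : S t = S r := by
    rw [hS]
    apply Finset.sum_congr rfl
    intro m _
    obtain ⟨k, hk⟩ : ∃ k : ℤ, t = r + k := ⟨⌊t⌋, by rw [hr, Int.fract]; push_cast; ring⟩
    have harg : 2*π*(m:ℝ)*t = 2*π*(m:ℝ)*r + ((m * k : ℤ):ℝ) * (2*π) := by
      rw [hk]; push_cast; ring
    rw [harg, Real.sin_add_int_mul_two_pi]
  have hnint : nint t = min r (1 - r) := by
    rw [nint, abs_sub_round_eq_min, hr]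
  rcases eq_or_lt_of_le hr0 with hcase | hcase
  · -- t is an integer
    have hS0 : S r = 0 := by
      rw [hS]
      apply Finset.sum_eq_zero
      intro m _
      rw [← hcase]
      norm_num
    have hnint0 : nint t = 0 := by rw [hnint, ← hcase]; norm_num
    rw [hnint0, if_pos rfl, hpsit, hSt, hS0, ← hcase]
    rw [show (0:ℝ) - 1/2 + 0 = -(1/2) from by ring, abs_neg,
      abs_of_nonneg (by norm_num : (0:ℝ) ≤ 1/2)]
    norm_num
  · -- t is not an integer
    have hnintpos : 0 < nint t := by
      rw [hnint]; exact lt_min hcase (by linarith)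
    rw [if_neg hnintpos.ne']
    rcases le_total r (1/2) with hhalf | hhalf
    · have hkey := key N hN1 hcase hhalf
      have hnr : nint t = r := by rw [hnint, min_eq_left (by linarith)]
      rw [hpsit, hSt, hnr]
      exact le_trans hkey (minle hM hcase hMN)
    · set s := 1 - r with hs
      have hs0 : 0 < s := by rw [hs]; linarith
      have hs2 : s ≤ 1/2 := by rw [hs]; linarith
      have hflip : (r - 1/2) + S r = -((s - 1/2) + S s) := by
        have hSr : S r = -S s := by
          rw [hS, ← Finset.sum_neg_distrib]
          apply Finset.sum_congr rfl
          intro m _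
          have harg : 2*π*(m:ℝ)*r = -(2*π*(m:ℝ)*s) + ((m : ℤ):ℝ) * (2*π) := by
            rw [hs]; push_cast; ring
          rw [harg, Real.sin_add_int_mul_two_pi, Real.sin_neg]
          ring
        rw [hSr, hs]; ring
      have hkey := key N hN1 hs0 hs2
      have hnr : nint t = s := by
        rw [hnint, hs]
        exact min_eq_right (by linarith)
      rw [hpsit, hSt, hflip, abs_neg, hnr]
      exact le_trans hkey (minle hM hs0 hMN)
end

section
/- Let α ∈ ℝ, a ∈ ℤ, q ∈ ℕ with |α − a/q| < 1/q², gcd(a,q) = 1, q ≥ 2. Fix an integer H with 1 ≤ H ≤ q^{1/2}. For each integer h with 1 ≤ h ≤ H, choose integers a_h, q_h with |αh − a_h/q_h| ≤ 1/(q_h·q²), gcd(a_h, q_h) = 1, and 1 ≤ q_h ≤ q². Then q_h > q^{1//3} for every such h. -/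
open Real

/-- Rational approximation lower bound: with `|α - a/q| < 1/q²`, `gcd(a,q)=1`,
`q ≥ 2`, `1 ≤ H ≤ q^{1/2}`, if for `1 ≤ h ≤ H` the integers `a_h, q_h` satisfy
`|αh - a_h/q_h| ≤ 1/(q_h q²)`, `gcd(a_h,q_h)=1`, `1 ≤ q_h ≤ q²`, then
`q_h > q^{1/3}`. -/
theorem statement6 (α : ℝ) (a : ℤ) (q : ℕ) (hq : 2 ≤ q)
    (hαa : |α - (a : ℝ) / q| < 1 / (q : ℝ) ^ 2) (hgcd : Int.gcd a q = 1)
    (H : ℕ) (hH1 : 1 ≤ H) (hH2 : (H : ℝ) ≤ (q : ℝ) ^ ((1:ℝ)/2))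
    (h : ℕ) (hh : 1 ≤ h ∧ h ≤ H) (ah : ℤ) (qh : ℕ) (hqh1 : 1 ≤ qh)
    (hqh2 : qh ≤ q ^ 2) (hgcdh : Int.gcd ah qh = 1)
    (happrox : |α * h - (ah : ℝ) / qh| ≤ 1 / (qh * (q : ℝ) ^ 2)) :
    (q : ℝ) ^ ((1:ℝ)/3) < qh := by
  by_contra hc
  push_neg at hc
  have hq1 : (1:ℝ) < q := by exact_mod_cast hq
  have hq0 : (0:ℝ) < q := by linarith
  have hh1 : 1 ≤ h := hh.1
  have hhr : (1:ℝ) ≤ h := by exact_mod_cast hh1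
  have hqhr : (1:ℝ) ≤ qh := by exact_mod_cast hqh1
  have hN : h * qh < q := by
    have : ((h * qh : ℕ) : ℝ) < q := by
      push_cast
      calc (h:ℝ) * qh ≤ q ^ ((1:ℝ)/2) * q ^ ((1:ℝ)/3) := by
            apply mul_le_mul _ hc (by linarith) (Real.rpow_nonneg hq0.le _)
            exact le_trans (by exact_mod_cast hh.2) hH2
        _ = q ^ ((5:ℝ)/6) := by rw [← Real.rpow_add hq0]; norm_num
        _ < q ^ (1:ℝ) := Real.rpow_lt_rpow_of_exponent_lt hq1 (by norm_num)
        _ = q := Real.rpow_one _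
    exact_mod_cast this
  have hne : (a * (h * qh : ℕ) : ℤ) ≠ (q : ℤ) * ah := by
    intro he
    have hdvd : (q : ℤ) ∣ a * (h * qh : ℕ) := he ▸ ⟨ah, rfl⟩
    have hcop : IsCoprime (q : ℤ) a := (Int.isCoprime_iff_gcd_eq_one.mpr hgcd).symm
    have hdvd2 : (q : ℤ) ∣ ((h * qh : ℕ) : ℤ) := hcop.dvd_of_dvd_mul_left hdvd
    have hpos : (0:ℤ) < ((h * qh : ℕ) : ℤ) := by positivity
    have := Int.le_of_dvd hpos hdvd2
    have : q ≤ h * qh := by exact_mod_cast this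
    omega
  have hNum : (1:ℝ) ≤ ((|a * (h * qh : ℕ) - (q:ℤ) * ah| : ℤ) : ℝ) := by
    have h0 : (a * (h * qh : ℕ) - (q:ℤ) * ah : ℤ) ≠ 0 := sub_ne_zero.mpr hne
    exact_mod_cast Int.one_le_abs (by omega)
  have hNr : (0:ℝ) < (h:ℝ) * qh := by positivity
  have hqhr0 : (0:ℝ) < (qh:ℝ) := by linarith
  have hhr0 : (0:ℝ) < (h:ℝ) := by linarith
  have e1 : 1 / ((q:ℝ) * ((h:ℝ) * qh)) ≤ |(a:ℝ)/q - (ah:ℝ)/((h:ℝ)*qh)| := by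
    have heq : (a:ℝ)/q - (ah:ℝ)/((h:ℝ)*qh)
        = ((a * (h * qh : ℕ) - (q:ℤ) * ah : ℤ) : ℝ) / ((q:ℝ)*((h:ℝ)*qh)) := by
      push_cast
      field_simp
    rw [heq, abs_div, abs_of_pos (mul_pos hq0 hNr)]
    apply div_le_div_of_nonneg_right _ (by positivity)
    rw [← Int.cast_abs]
    exact hNum
  have e2 : |α - (ah:ℝ)/((h:ℝ)*qh)| ≤ 1/((h:ℝ)*((qh:ℝ)*(q:ℝ)^2)) := by
    have heq : α - (ah:ℝ)/((h:ℝ)*qh) = (α*h - (ah:ℝ)/qh)/h := by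
      field_simp
    rw [heq, abs_div, abs_of_pos hhr0]
    calc |α*h - (ah:ℝ)/qh| / h ≤ (1/((qh:ℝ)*(q:ℝ)^2)) / h := by gcongr
      _ = 1/((h:ℝ)*((qh:ℝ)*(q:ℝ)^2)) := by ring
  have e3 : |(a:ℝ)/q - (ah:ℝ)/((h:ℝ)*qh)| < 1/(q:ℝ)^2 + 1/((h:ℝ)*((qh:ℝ)*(q:ℝ)^2)) := by
    have heq : (a:ℝ)/q - (ah:ℝ)/((h:ℝ)*qh) = (α - (ah:ℝ)/((h:ℝ)*qh)) - (α - (a:ℝ)/q) := by ring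
    calc |(a:ℝ)/q - (ah:ℝ)/((h:ℝ)*qh)| ≤ |α - (ah:ℝ)/((h:ℝ)*qh)| + |α - (a:ℝ)/q| := by
          rw [heq]; exact abs_sub _ _
      _ < 1/((h:ℝ)*((qh:ℝ)*(q:ℝ)^2)) + 1/(q:ℝ)^2 := by
          exact add_lt_add_of_le_of_lt e2 hαa
      _ = 1/(q:ℝ)^2 + 1/((h:ℝ)*((qh:ℝ)*(q:ℝ)^2)) := by ring
  have hNq : ((h:ℝ)*(qh:ℝ)) + 1 ≤ (q:ℝ) := by
    have : h * qh + 1 ≤ q := hN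
    exact_mod_cast this
  have e4 : 1/(q:ℝ)^2 + 1/((h:ℝ)*((qh:ℝ)*(q:ℝ)^2)) ≤ 1/((q:ℝ)*((h:ℝ)*qh)) := by
    rw [div_add_div _ _ (by positivity) (by positivity), div_le_div_iff₀ (by positivity) (by positivity)]
    have key : ((q:ℝ)^3*((h:ℝ)*qh)) * (((h:ℝ)*qh)+1) ≤ ((q:ℝ)^3*((h:ℝ)*qh)) * q :=
      mul_le_mul_of_nonneg_left hNq (by positivity)
    nlinarith [key]
  linarith
end
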